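/- Let g : [0,1) → ℝ be defined by g(y) = 1 − 8/((√((9−y)/(1−y)) + 2)² − 1). Then g maps [0,1) into [0,1), and for every integer p ≥ 0 and every y ∈ [0,1), the p-th iterate of g satisfies g^[p](y) = 1 − 8/((√((9−y)/(1−y)) + 2p)² − 1). -/

import Mathlib

private lemma sq_ratio_ge (y : ℝ) (hy : y ∈ Set.Ico (0:ℝ) 1) :
    3 ≤ Real.sqrt ((9 - y) / (1 - y)) := by
  obtain ⟨h0, h1⟩ := hy
  have h1' : 0 < 1 - y := by linarith
  have h9 : (9:ℝ) ≤ (9 - y) / (1 - y) := by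
    rw [le_div_iff₀ h1']; nlinarith
  calc (3:ℝ) = Real.sqrt 9 := by
        rw [show (9:ℝ) = 3^2 by norm_num, Real.sqrt_sq (by norm_num)]
    _ ≤ _ := Real.sqrt_le_sqrt h9

private lemma mem_Ico_of (t : ℝ) (ht : 3 ≤ t) :
    1 - 8 / (t^2 - 1) ∈ Set.Ico (0:ℝ) 1 := by
  have hpos : 0 < t^2 - 1 := by nlinarith
  rw [Set.mem_Ico]
  constructor
  · have : 8 / (t^2 - 1) ≤ 1 := by rw [div_le_one hpos]; nlinarith
    linarith
  · have : 0 < 8 / (t^2 - 1) := by positivity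
    linarith

private lemma sqrt_next (y : ℝ) (hy : y ∈ Set.Ico (0:ℝ) 1) :
    Real.sqrt ((9 - (1 - 8 / ((Real.sqrt ((9-y)/(1-y)) + 2)^2 - 1))) /
      (1 - (1 - 8 / ((Real.sqrt ((9-y)/(1-y)) + 2)^2 - 1)))) =
    Real.sqrt ((9-y)/(1-y)) + 2 := by
  set s := Real.sqrt ((9-y)/(1-y)) with hs
  have h3 : 3 ≤ s := sq_ratio_ge y hy
  have hd : 0 < (s+2)^2 - 1 := by nlinarith
  have key : (9 - (1 - 8 / ((s+2)^2 - 1))) / (1 - (1 - 8 / ((s+2)^2 - 1))) = (s+2)^2 := by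
    field_simp
    ring
  rw [key, Real.sqrt_sq (by linarith)]

/-- `g` maps `[0,1)` into `[0,1)` and its `p`-th iterate has the explicit form
`g^[p](y) = 1 − 8/((√((9−y)/(1−y)) + 2p)² − 1)`. -/
theorem g_mapsTo_and_iterate_formula (g : ℝ → ℝ)
    (hg : ∀ y ∈ Set.Ico (0 : ℝ) 1,
      g y = 1 - 8 / ((Real.sqrt ((9 - y) / (1 - y)) + 2) ^ 2 - 1)) :
    Set.MapsTo g (Set.Ico (0 : ℝ) 1) (Set.Ico (0 : ℝ) 1) ∧
    ∀ p : ℕ, ∀ y ∈ Set.Ico (0 : ℝ) 1,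
      g^[p] y = 1 - 8 / ((Real.sqrt ((9 - y) / (1 - y)) + 2 * p) ^ 2 - 1) := by
  have hmaps : Set.MapsTo g (Set.Ico (0:ℝ) 1) (Set.Ico (0:ℝ) 1) := by
    intro y hy
    rw [hg y hy]
    exact mem_Ico_of _ (by linarith [sq_ratio_ge y hy])
  refine ⟨hmaps, ?_⟩
  intro p
  induction p with
  | zero =>
    intro y hy
    obtain ⟨h0, h1⟩ := hy
    have h1' : 0 < 1 - y := by linarith
    have hnn : 0 ≤ (9 - y) / (1 - y) := div_nonneg (by linarith) (by linarith)
    have hsq : Real.sqrt ((9-y)/(1-y)) ^ 2 = (9-y)/(1-y) := Real.sq_sqrt hnn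
    simp only [Function.iterate_zero, id_eq, Nat.cast_zero, mul_zero, add_zero, hsq]
    have hd : (9-y)/(1-y) - 1 = 8/(1-y) := by field_simp; ring
    rw [hd]
    field_simp
    ring
  | succ p ih =>
    intro y hy
    rw [Function.iterate_succ_apply, ih (g y) (hmaps hy)]
    rw [hg y hy, sqrt_next y hy]
    push_cast
    ring_nf
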